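/- The countable family Z = {{(i,j)}×ω : i,j ∈ ω} ∪ {{i}×ω² : i ∈ ω} of subsets of ω³ has the property that for every A ∉ BI there is a set X ∈ Z such that both A ∩ X and A \ X are infinite. -/

import Mathlib

open Set

/-- The ideal `Fin ⊗ Fin` on `ω²`: sets all but finitely many of whose
vertical sections are finite. -/
def FinFin : Set (Set (ℕ × ℕ)) :=
  {A | {n : ℕ | ¬ ({m : ℕ | (n, m) ∈ A}).Finite}.Finite}

/-- The `i`-th section of a subset of `ω³`. -/
def BIsec (i : ℕ) (A : Set (ℕ × ℕ × ℕ)) : Set (ℕ × ℕ) := {p | (i, p) ∈ A}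

/-- The ideal `BI` on `ω³`. -/
def BI : Set (Set (ℕ × ℕ × ℕ)) :=
  {A | ∃ k : ℕ, (∀ i < k, BIsec i A ∈ FinFin) ∧ ∀ i ≥ k, (BIsec i A).Finite}

/-- `I` is an ideal on `X`: contains all finite sets, closed under subsets and
finite unions, and proper. -/
def IsIdeal {X : Type*} (I : Set (Set X)) : Prop :=
  (∀ A : Set X, A.Finite → A ∈ I) ∧
  (∀ A B : Set X, A ∈ I → B ⊆ A → B ∈ I) ∧
  (∀ A B : Set X, A ∈ I → B ∈ I → A ∪ B ∈ I) ∧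
  (Set.univ : Set X) ∉ I

/-- The countable family `Z` of subsets of `ω³`. -/
def Zfam : Set (Set (ℕ × ℕ × ℕ)) :=
  {X | ∃ i j : ℕ, X = {p : ℕ × ℕ × ℕ | p.1 = i ∧ p.2.1 = j}} ∪
  {X | ∃ i : ℕ, X = {p : ℕ × ℕ × ℕ | p.1 = i}}

/-- Every `BI`-positive set is split by a member of `Z`. -/
theorem stmt_4 : ∀ A : Set (ℕ × ℕ × ℕ), A ∉ BI →
    ∃ X ∈ Zfam, (A ∩ X).Infinite ∧ (A \ X).Infinite := by
  intro A hA
  by_cases h : ∀ i, BIsec i A ∈ FinFin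
  · -- all sections in FinFin; infinitely many infinite sections
    have hk : ∀ k, ∃ i, k ≤ i ∧ (BIsec i A).Infinite := by
      intro k
      by_contra hc
      push_neg at hc
      exact hA ⟨k, fun i _ => h i, fun i hi => hc i hi⟩
    obtain ⟨i₀, -, h0⟩ := hk 0
    obtain ⟨i₁, hi₁, h1⟩ := hk (i₀ + 1)
    refine ⟨{p | p.1 = i₀}, Or.inr ⟨i₀, rfl⟩, ?_, ?_⟩
    · have := (h0.image (Function.Injective.injOn (f := fun p : ℕ × ℕ => (i₀, p))
        (fun a b hab => by simpa using hab)))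
      refine this.mono ?_
      rintro _ ⟨p, hp, rfl⟩
      exact ⟨hp, rfl⟩
    · have := (h1.image (Function.Injective.injOn (f := fun p : ℕ × ℕ => (i₁, p))
        (fun a b hab => by simpa using hab)))
      refine this.mono ?_
      rintro _ ⟨p, hp, rfl⟩
      exact ⟨hp, by simp; omega⟩
  · push_neg at h
    obtain ⟨i₀, hi₀⟩ := h
    have hT : {n : ℕ | ¬ ({m : ℕ | (n, m) ∈ BIsec i₀ A}).Finite}.Infinite :=
      hi₀
    obtain ⟨j, hj, j', hj', hne⟩ := hT.nontrivial
    have hj : {m : ℕ | (j, m) ∈ BIsec i₀ A}.Infinite := hj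
    have hj' : {m : ℕ | (j', m) ∈ BIsec i₀ A}.Infinite := hj'
    refine ⟨{p | p.1 = i₀ ∧ p.2.1 = j}, Or.inl ⟨i₀, j, rfl⟩, ?_, ?_⟩
    · have := (hj.image (Function.Injective.injOn (f := fun m : ℕ => (i₀, j, m))
        (fun a b hab => by simpa using hab)))
      refine this.mono ?_
      rintro _ ⟨m, hm, rfl⟩
      exact ⟨hm, rfl, rfl⟩
    · have := (hj'.image (Function.Injective.injOn (f := fun m : ℕ => (i₀, j', m))
        (fun a b hab => by simpa using hab)))
      refine this.mono ?_
      rintro _ ⟨m, hm, rfl⟩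
      exact ⟨hm, by simp [hne.symm]⟩
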